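/- Let Λ = (0,∞)³ and let Λ₁ = {(x,y,z) ∈ Λ : x > y+z}, Λ₂ = {(x,y,z) ∈ Λ : y > x+z}, Λ₃ = {(x,y,z) ∈ Λ : z > x+y}, Λ₄ = {(x,y,z) ∈ Λ : x < y+z, y < x+z, z < x+y}. Let Λ* = Λ₄ and, with s = α+β+γ, define Λ*₁ = {(α,β,γ) ∈ Λ* : α < s/4}, Λ*₂ = {(α,β,γ) ∈ Λ* : β < s/4}, Λ*₃ = {(α,β,γ) ∈ Λ* : γ < s/4}, Λ*₄ = {(α,β,γ) ∈ Λ* : α,β,γ > s/4}. Define F̃ : Λ × Λ → ℝ⁶ by F̃(x,y,z,α,β,γ) = (x−y−z, y, z, α, α+β, α+γ) on Λ₁ × Λ, (x, y−x−z, z, α+β, β, β+γ) on Λ₂ × Λ, (x, y, z−x−y, α+γ, β+γ, γ) on Λ₃ × Λ, and (−x+y+z, x−y+z, x+y−z, (β+γ)/2, (α+γ)/2, (α+β)/2) on Λ₄ × Λ. Then for each i ∈ {1,2,3,4}, F̃ maps Λᵢ × Λ* bijectively onto Λ × Λ*ᵢ. -/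

import Mathlib

open Set

/-- The positive cone `Λ = (0,∞)³`. -/
def posCone3 : Set (ℝ × ℝ × ℝ) := {v | 0 < v.1 ∧ 0 < v.2.1 ∧ 0 < v.2.2}

/-- `Λ₁ = {x > y + z}`. -/
def revCone1 : Set (ℝ × ℝ × ℝ) := {v ∈ posCone3 | v.2.1 + v.2.2 < v.1}
/-- `Λ₂ = {y > x + z}`. -/
def revCone2 : Set (ℝ × ℝ × ℝ) := {v ∈ posCone3 | v.1 + v.2.2 < v.2.1}
/-- `Λ₃ = {z > x + y}`. -/
def revCone3 : Set (ℝ × ℝ × ℝ) := {v ∈ posCone3 | v.1 + v.2.1 < v.2.2}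
/-- `Λ₄ = Λ*`: triples satisfying the strict triangle inequalities. -/
def revCone4 : Set (ℝ × ℝ × ℝ) :=
  {v ∈ posCone3 | v.1 < v.2.1 + v.2.2 ∧ v.2.1 < v.1 + v.2.2 ∧ v.2.2 < v.1 + v.2.1}

def revConeS1 : Set (ℝ × ℝ × ℝ) := {v ∈ revCone4 | v.1 < (v.1 + v.2.1 + v.2.2) / 4}
def revConeS2 : Set (ℝ × ℝ × ℝ) := {v ∈ revCone4 | v.2.1 < (v.1 + v.2.1 + v.2.2) / 4}
def revConeS3 : Set (ℝ × ℝ × ℝ) := {v ∈ revCone4 | v.2.2 < (v.1 + v.2.1 + v.2.2) / 4}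
def revConeS4 : Set (ℝ × ℝ × ℝ) :=
  {v ∈ revCone4 | (v.1 + v.2.1 + v.2.2) / 4 < v.1 ∧ (v.1 + v.2.1 + v.2.2) / 4 < v.2.1 ∧
                  (v.1 + v.2.1 + v.2.2) / 4 < v.2.2}

/-- The natural extension map `F̃` of the Reverse algorithm. -/
noncomputable def revExt : (ℝ × ℝ × ℝ) × (ℝ × ℝ × ℝ) → (ℝ × ℝ × ℝ) × (ℝ × ℝ × ℝ)
  | ((x, y, z), (a, b, c)) =>
    if y + z < x then ((x - y - z, y, z), (a, a + b, a + c))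
    else if x + z < y then ((x, y - x - z, z), (a + b, b, b + c))
    else if x + y < z then ((x, y, z - x - y), (a + c, b + c, c))
    else ((-x + y + z, x - y + z, x + y - z), ((b + c) / 2, (a + c) / 2, (a + b) / 2))


noncomputable def revG1 : (ℝ × ℝ × ℝ) × (ℝ × ℝ × ℝ) → (ℝ × ℝ × ℝ) × (ℝ × ℝ × ℝ)
  | ((X, Y, Z), (A, B, C)) => ((X + Y + Z, Y, Z), (A, B - A, C - A))

noncomputable def revG2 : (ℝ × ℝ × ℝ) × (ℝ × ℝ × ℝ) → (ℝ × ℝ × ℝ) × (ℝ × ℝ × ℝ)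
  | ((X, Y, Z), (A, B, C)) => ((X, X + Y + Z, Z), (A - B, B, C - B))

noncomputable def revG3 : (ℝ × ℝ × ℝ) × (ℝ × ℝ × ℝ) → (ℝ × ℝ × ℝ) × (ℝ × ℝ × ℝ)
  | ((X, Y, Z), (A, B, C)) => ((X, Y, X + Y + Z), (A - C, B - C, C))

noncomputable def revG4 : (ℝ × ℝ × ℝ) × (ℝ × ℝ × ℝ) → (ℝ × ℝ × ℝ) × (ℝ × ℝ × ℝ)
  | ((X, Y, Z), (A, B, C)) =>
      (((Y + Z) / 2, (X + Z) / 2, (X + Y) / 2), (-A + B + C, A - B + C, A + B - C))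

/-- For each `i ∈ {1,2,3,4}`, the Reverse natural extension `F̃` maps `Λᵢ × Λ*`
bijectively onto `Λ × Λ*ᵢ`. -/
theorem stmt_5 :
    Set.BijOn revExt (revCone1 ×ˢ revCone4) (posCone3 ×ˢ revConeS1) ∧
    Set.BijOn revExt (revCone2 ×ˢ revCone4) (posCone3 ×ˢ revConeS2) ∧
    Set.BijOn revExt (revCone3 ×ˢ revCone4) (posCone3 ×ˢ revConeS3) ∧
    Set.BijOn revExt (revCone4 ×ˢ revCone4) (posCone3 ×ˢ revConeS4) := by
  refine ⟨?_, ?_, ?_, ?_⟩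
  · apply Set.InvOn.bijOn (f' := revG1)
    · constructor
      · rintro ⟨⟨x, y, z⟩, a, b, c⟩ hp
        simp only [revCone1, revCone4, posCone3, Set.mem_prod, Set.mem_setOf_eq] at hp
        obtain ⟨⟨⟨hx, hy, hz⟩, h1⟩, ⟨ha, hb, hc⟩, t1, t2, t3⟩ := hp
        simp only [revExt]
        rw [if_pos h1]
        simp only [revG1, Prod.mk.injEq, and_true, true_and]
        and_intros <;> ring
      · rintro ⟨⟨X, Y, Z⟩, A, B, C⟩ hp
        simp only [revConeS1, revCone4, posCone3, Set.mem_prod, Set.mem_setOf_eq] at hp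
        obtain ⟨⟨hX, hY, hZ⟩, ⟨⟨hA, hB, hC⟩, t1, t2, t3⟩, hs⟩ := hp
        simp only [revG1]
        simp only [revExt]
        rw [if_pos (show Y + Z < X + Y + Z by linarith)]
        simp only [Prod.mk.injEq, and_true, true_and]
        and_intros <;> ring
    · rintro ⟨⟨x, y, z⟩, a, b, c⟩ hp
      simp only [revCone1, revCone4, posCone3, Set.mem_prod, Set.mem_setOf_eq] at hp
      obtain ⟨⟨⟨hx, hy, hz⟩, h1⟩, ⟨ha, hb, hc⟩, t1, t2, t3⟩ := hp
      simp only [revExt]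
      rw [if_pos h1]
      simp only [revConeS1, revCone4, posCone3, Set.mem_prod, Set.mem_setOf_eq]
      and_intros <;> linarith
    · rintro ⟨⟨X, Y, Z⟩, A, B, C⟩ hp
      simp only [revConeS1, revCone4, posCone3, Set.mem_prod, Set.mem_setOf_eq] at hp
      obtain ⟨⟨hX, hY, hZ⟩, ⟨⟨hA, hB, hC⟩, t1, t2, t3⟩, hs⟩ := hp
      simp only [revG1, revCone1, revCone4, posCone3, Set.mem_prod, Set.mem_setOf_eq]
      and_intros <;> linarith
  · apply Set.InvOn.bijOn (f' := revG2)
    · constructor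
      · rintro ⟨⟨x, y, z⟩, a, b, c⟩ hp
        simp only [revCone2, revCone4, posCone3, Set.mem_prod, Set.mem_setOf_eq] at hp
        obtain ⟨⟨⟨hx, hy, hz⟩, h1⟩, ⟨ha, hb, hc⟩, t1, t2, t3⟩ := hp
        simp only [revExt]
        rw [if_neg (show ¬ (y + z < x) by push_neg; linarith), if_pos h1]
        simp only [revG2, Prod.mk.injEq, and_true, true_and]
        and_intros <;> ring
      · rintro ⟨⟨X, Y, Z⟩, A, B, C⟩ hp
        simp only [revConeS2, revCone4, posCone3, Set.mem_prod, Set.mem_setOf_eq] at hp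
        obtain ⟨⟨hX, hY, hZ⟩, ⟨⟨hA, hB, hC⟩, t1, t2, t3⟩, hs⟩ := hp
        simp only [revG2]
        simp only [revExt]
        rw [if_neg (show ¬ (X + Y + Z + Z < X) by push_neg; linarith),
          if_pos (show X + Z < X + Y + Z by linarith)]
        simp only [Prod.mk.injEq, and_true, true_and]
        and_intros <;> ring
    · rintro ⟨⟨x, y, z⟩, a, b, c⟩ hp
      simp only [revCone2, revCone4, posCone3, Set.mem_prod, Set.mem_setOf_eq] at hp
      obtain ⟨⟨⟨hx, hy, hz⟩, h1⟩, ⟨ha, hb, hc⟩, t1, t2, t3⟩ := hp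
      simp only [revExt]
      rw [if_neg (show ¬ (y + z < x) by push_neg; linarith), if_pos h1]
      simp only [revConeS2, revCone4, posCone3, Set.mem_prod, Set.mem_setOf_eq]
      and_intros <;> linarith
    · rintro ⟨⟨X, Y, Z⟩, A, B, C⟩ hp
      simp only [revConeS2, revCone4, posCone3, Set.mem_prod, Set.mem_setOf_eq] at hp
      obtain ⟨⟨hX, hY, hZ⟩, ⟨⟨hA, hB, hC⟩, t1, t2, t3⟩, hs⟩ := hp
      simp only [revG2, revCone2, revCone4, posCone3, Set.mem_prod, Set.mem_setOf_eq]
      and_intros <;> linarith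
  · apply Set.InvOn.bijOn (f' := revG3)
    · constructor
      · rintro ⟨⟨x, y, z⟩, a, b, c⟩ hp
        simp only [revCone3, revCone4, posCone3, Set.mem_prod, Set.mem_setOf_eq] at hp
        obtain ⟨⟨⟨hx, hy, hz⟩, h1⟩, ⟨ha, hb, hc⟩, t1, t2, t3⟩ := hp
        simp only [revExt]
        rw [if_neg (show ¬ (y + z < x) by push_neg; linarith),
          if_neg (show ¬ (x + z < y) by push_neg; linarith), if_pos h1]
        simp only [revG3, Prod.mk.injEq, and_true, true_and]
        and_intros <;> ring
      · rintro ⟨⟨X, Y, Z⟩, A, B, C⟩ hp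
        simp only [revConeS3, revCone4, posCone3, Set.mem_prod, Set.mem_setOf_eq] at hp
        obtain ⟨⟨hX, hY, hZ⟩, ⟨⟨hA, hB, hC⟩, t1, t2, t3⟩, hs⟩ := hp
        simp only [revG3]
        simp only [revExt]
        rw [if_neg (show ¬ (Y + (X + Y + Z) < X) by push_neg; linarith),
          if_neg (show ¬ (X + (X + Y + Z) < Y) by push_neg; linarith),
          if_pos (show X + Y < X + Y + Z by linarith)]
        simp only [Prod.mk.injEq, and_true, true_and]
        and_intros <;> ring
    · rintro ⟨⟨x, y, z⟩, a, b, c⟩ hp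
      simp only [revCone3, revCone4, posCone3, Set.mem_prod, Set.mem_setOf_eq] at hp
      obtain ⟨⟨⟨hx, hy, hz⟩, h1⟩, ⟨ha, hb, hc⟩, t1, t2, t3⟩ := hp
      simp only [revExt]
      rw [if_neg (show ¬ (y + z < x) by push_neg; linarith),
        if_neg (show ¬ (x + z < y) by push_neg; linarith), if_pos h1]
      simp only [revConeS3, revCone4, posCone3, Set.mem_prod, Set.mem_setOf_eq]
      and_intros <;> linarith
    · rintro ⟨⟨X, Y, Z⟩, A, B, C⟩ hp
      simp only [revConeS3, revCone4, posCone3, Set.mem_prod, Set.mem_setOf_eq] at hp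
      obtain ⟨⟨hX, hY, hZ⟩, ⟨⟨hA, hB, hC⟩, t1, t2, t3⟩, hs⟩ := hp
      simp only [revG3, revCone3, revCone4, posCone3, Set.mem_prod, Set.mem_setOf_eq]
      and_intros <;> linarith
  · apply Set.InvOn.bijOn (f' := revG4)
    · constructor
      · rintro ⟨⟨x, y, z⟩, a, b, c⟩ hp
        simp only [revCone4, posCone3, Set.mem_prod, Set.mem_setOf_eq] at hp
        obtain ⟨⟨⟨hx, hy, hz⟩, s1, s2, s3⟩, ⟨ha, hb, hc⟩, t1, t2, t3⟩ := hp
        simp only [revExt]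
        rw [if_neg (show ¬ (y + z < x) by push_neg; linarith),
          if_neg (show ¬ (x + z < y) by push_neg; linarith),
          if_neg (show ¬ (x + y < z) by push_neg; linarith)]
        simp only [revG4, Prod.mk.injEq]
        and_intros <;> ring
      · rintro ⟨⟨X, Y, Z⟩, A, B, C⟩ hp
        simp only [revConeS4, revCone4, posCone3, Set.mem_prod, Set.mem_setOf_eq] at hp
        obtain ⟨⟨hX, hY, hZ⟩, ⟨⟨hA, hB, hC⟩, t1, t2, t3⟩, s1, s2, s3⟩ := hp
        simp only [revG4]
        simp only [revExt]
        rw [if_neg (show ¬ ((X + Z) / 2 + (X + Y) / 2 < (Y + Z) / 2) by push_neg; linarith),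
          if_neg (show ¬ ((Y + Z) / 2 + (X + Y) / 2 < (X + Z) / 2) by push_neg; linarith),
          if_neg (show ¬ ((Y + Z) / 2 + (X + Z) / 2 < (X + Y) / 2) by push_neg; linarith)]
        simp only [Prod.mk.injEq, and_true, true_and]
        and_intros <;> ring
    · rintro ⟨⟨x, y, z⟩, a, b, c⟩ hp
      simp only [revCone4, posCone3, Set.mem_prod, Set.mem_setOf_eq] at hp
      obtain ⟨⟨⟨hx, hy, hz⟩, s1, s2, s3⟩, ⟨ha, hb, hc⟩, t1, t2, t3⟩ := hp
      simp only [revExt]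
      rw [if_neg (show ¬ (y + z < x) by push_neg; linarith),
        if_neg (show ¬ (x + z < y) by push_neg; linarith),
        if_neg (show ¬ (x + y < z) by push_neg; linarith)]
      simp only [revConeS4, revCone4, posCone3, Set.mem_prod, Set.mem_setOf_eq]
      and_intros <;> linarith
    · rintro ⟨⟨X, Y, Z⟩, A, B, C⟩ hp
      simp only [revConeS4, revCone4, posCone3, Set.mem_prod, Set.mem_setOf_eq] at hp
      obtain ⟨⟨hX, hY, hZ⟩, ⟨⟨hA, hB, hC⟩, t1, t2, t3⟩, s1, s2, s3⟩ := hp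
      simp only [revG4, revCone4, posCone3, Set.mem_prod, Set.mem_setOf_eq]
      and_intros <;> linarith
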